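/- For every a ∈ ℝ^m (that is, a ∈ ℂ^m with all coordinates real), the number −i·C(a) is real; equivalently, C(a) is purely imaginary. -/

import Mathlib

open Complex Filter Real

noncomputable section

/-- The point `r e^{iθ}` in the complex plane. -/
def rayPt (r θ : ℝ) : ℂ := (r : ℂ) * Complex.exp (θ * Complex.I)

/-- The branch `X^s := exp(s(log r + iθ))` for `X = r e^{iθ}`. -/
def rayPow (r θ : ℝ) (s : ℂ) : ℂ := Complex.exp (s * ((Real.log r : ℂ) + θ * Complex.I))

/-- `ω := exp(2πi/(m+2))`. -/
def om (m : ℕ) : ℂ := Complex.exp (2 * Real.pi * Complex.I / (m + 2))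

/-- `ω^s := exp((2πi/(m+2)) s)`. -/
def omPow (m : ℕ) (s : ℂ) : ℂ := Complex.exp ((2 * Real.pi * Complex.I / (m + 2)) * s)

/-- The coefficients `b_n(a)` of the formal square root of `1 + a₁ x + ⋯ + a_m x^m`:
`b₀ = 1`, `b_n = (1/2)(a_n - ∑_{i=1}^{n-1} b_i b_{n-i})` (with `a_k = 0` for `k > m`). -/
def bcoef (m : ℕ) (a : Fin m → ℂ) : ℕ → ℂ
  | 0 => 1
  | n + 1 => (1 / 2) * ((if h : n < m then a ⟨n, h⟩ else 0) -
      ∑ i ∈ (Finset.Ico 1 (n + 1)).attach,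
        bcoef m a i.1 * bcoef m a (n + 1 - i.1))
decreasing_by
  all_goals
    have h1 := (Finset.mem_Ico.mp i.2).1
    have h2 := (Finset.mem_Ico.mp i.2).2
    omega

/-- `r_m(a) := -m/4` for odd `m`, `-m/4 - b_{1+m/2}(a)` for even `m`. -/
def rmC (m : ℕ) (a : Fin m → ℂ) : ℂ :=
  if m % 2 = 1 then -(m : ℂ) / 4 else -(m : ℂ) / 4 - bcoef m a (1 + m / 2)

/-- `S(X, a) = ∑_{k=0}^{⌊(m+1)/2⌋} (2 b_k(a)/(m+2-2k)) X^{(m+2-2k)/2}` at `X = r e^{iθ}`. -/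
def Sfun (m : ℕ) (a : Fin m → ℂ) (r θ : ℝ) : ℂ :=
  ∑ k ∈ Finset.range ((m + 1) / 2 + 1),
    (2 * bcoef m a k / ((m : ℂ) + 2 - 2 * (k : ℂ))) * rayPow r θ (((m : ℂ) + 2 - 2 * (k : ℂ)) / 2)

/-- The potential `X^m + a₁ X^{m-1} + ⋯ + a_m`. -/
def pot (m : ℕ) (a : Fin m → ℂ) (X : ℂ) : ℂ :=
  X ^ m + ∑ k : Fin m, a k * X ^ (m - 1 - (k : ℕ))

/-- `ω_k(a) := (ω^k a₁, ω^{2k} a₂, …, ω^{km} a_m)`. -/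
def omAct (m : ℕ) (k : ℤ) (a : Fin m → ℂ) : Fin m → ℂ :=
  fun j => om m ^ (k * (((j : ℕ) : ℤ) + 1)) * a j

/-- Sibuya's asymptotic characterization of the canonical solution of
`-Φ'' + (X^m + a₁X^{m-1} + ⋯ + a_m)Φ = 0`:
`Φ(re^{iθ}) (re^{iθ})^{-r_m(a)} e^{S(re^{iθ},a)} → 1` for every `|θ| < 3π/(m+2)`. -/
def SibAsymp (m : ℕ) (a : Fin m → ℂ) (Φ : ℂ → ℂ) : Prop :=
  ∀ θ : ℝ, |θ| < 3 * Real.pi / (m + 2) →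
    Filter.Tendsto
      (fun r : ℝ => Φ (rayPt r θ) * rayPow r θ (-(rmC m a)) * Complex.exp (Sfun m a r θ))
      Filter.atTop (nhds 1)

open Complex Filter Real Topology

lemma bcoef_conj (m : ℕ) (a : Fin m → ℂ) (n : ℕ) :
    bcoef m (fun j => (starRingEnd ℂ) (a j)) n = (starRingEnd ℂ) (bcoef m a n) := by
  induction n using Nat.strong_induction_on with
  | _ n ih =>
    match n with
    | 0 => simp [bcoef]
    | n + 1 =>
      rw [bcoef, bcoef, map_mul, map_sub]
      congr 1
      · simp [Complex.ext_iff]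
      congr 1
      · split <;> simp
      · rw [map_sum]
        refine Finset.sum_congr rfl fun i hi => ?_
        rw [map_mul, ih i.1 (by have := (Finset.mem_Ico.mp i.2).2; omega),
          ih (n + 1 - i.1) (by have := (Finset.mem_Ico.mp i.2).1; omega)]
lemma conj_om (m : ℕ) : (starRingEnd ℂ) (om m) = (om m)⁻¹ := by
  rw [om, ← Complex.exp_conj, ← Complex.exp_neg]
  congr 1
  simp [map_div₀, Complex.conj_ofNat]
  ring

lemma om_ne_zero (m : ℕ) : om m ≠ 0 := Complex.exp_ne_zero _

lemma rmC_conj (m : ℕ) (c : Fin m → ℂ) :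
    rmC m (fun j => (starRingEnd ℂ) (c j)) = (starRingEnd ℂ) (rmC m c) := by
  rw [rmC, rmC, bcoef_conj]
  split <;> simp [map_div₀, Complex.conj_ofNat]

lemma rayPow_conj_real (r : ℝ) (s : ℂ) :
    (starRingEnd ℂ) (rayPow r 0 s) = rayPow r 0 ((starRingEnd ℂ) s) := by
  rw [rayPow, rayPow, ← Complex.exp_conj]
  congr 1
  simp

lemma Sfun_conj (m : ℕ) (c : Fin m → ℂ) (r : ℝ) :
    Sfun m (fun j => (starRingEnd ℂ) (c j)) r 0 = (starRingEnd ℂ) (Sfun m c r 0) := by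
  rw [Sfun, Sfun, map_sum]
  refine Finset.sum_congr rfl fun k _ => ?_
  rw [map_mul, bcoef_conj, rayPow_conj_real]
  congr 2
  · rw [map_div₀, map_mul]
    congr 1 <;> simp [map_div₀, Complex.conj_ofNat, Complex.ext_iff]
  · simp [map_div₀, Complex.conj_ofNat]

lemma pot_conj (m : ℕ) (c : Fin m → ℂ) (X : ℂ) :
    pot m (fun j => (starRingEnd ℂ) (c j)) ((starRingEnd ℂ) X) = (starRingEnd ℂ) (pot m c X) := by
  rw [pot, pot, map_add, map_sum, map_pow]
  congr 1
  refine Finset.sum_congr rfl fun k _ => ?_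
  rw [map_mul, map_pow]
lemma hasDerivAt_cflip {F : ℂ → ℂ} {c : ℂ} (z : ℂ) (h : HasDerivAt F c ((starRingEnd ℂ) z)) :
    HasDerivAt (fun w => (starRingEnd ℂ) (F ((starRingEnd ℂ) w))) ((starRingEnd ℂ) c) z := by
  rw [hasDerivAt_iff_tendsto_slope] at h ⊢
  have h1 : Tendsto (fun w : ℂ => (starRingEnd ℂ) w) (𝓝[≠] z) (𝓝[≠] ((starRingEnd ℂ) z)) := by
    apply tendsto_nhdsWithin_of_tendsto_nhds_of_eventually_within
    · exact (Complex.continuous_conj.tendsto z).mono_left nhdsWithin_le_nhds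
    · filter_upwards [self_mem_nhdsWithin] with w hw
      simp only [Set.mem_compl_iff, Set.mem_singleton_iff] at hw ⊢
      exact fun hc => hw (by simpa using congrArg (starRingEnd ℂ) hc)
  have h2 := (Complex.continuous_conj.tendsto c).comp (h.comp h1)
  refine h2.congr fun w => ?_
  simp only [Function.comp_apply, slope, map_sub, smul_eq_mul, map_mul, map_inv₀,
    Complex.conj_conj, vsub_eq_sub]

lemma differentiable_cflip {F : ℂ → ℂ} (hF : Differentiable ℂ F) :
    Differentiable ℂ (fun w => (starRingEnd ℂ) (F ((starRingEnd ℂ) w))) :=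
  fun z => (hasDerivAt_cflip z (hF _).hasDerivAt).differentiableAt

lemma deriv_cflip {F : ℂ → ℂ} (hF : Differentiable ℂ F) :
    deriv (fun w => (starRingEnd ℂ) (F ((starRingEnd ℂ) w))) =
      fun z => (starRingEnd ℂ) (deriv F ((starRingEnd ℂ) z)) :=
  funext fun z => (hasDerivAt_cflip z (hF _).hasDerivAt).deriv

lemma entire_deriv {f : ℂ → ℂ} (hf : Differentiable ℂ f) : Differentiable ℂ (deriv f) :=
  analyticOnNhd_univ_iff_differentiable.mp (analyticOnNhd_univ_iff_differentiable.mpr hf).deriv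
lemma rayPt_zero (r : ℝ) : rayPt r 0 = (r : ℂ) := by simp [rayPt]

lemma Sfun_re (m : ℕ) (b : Fin m → ℂ) (r : ℝ) (hr : 0 < r) :
    (Sfun m b r 0).re = ∑ k ∈ Finset.range ((m + 1) / 2 + 1),
      (2 * bcoef m b k / ((m : ℂ) + 2 - 2 * (k : ℂ))).re * r ^ (((m : ℝ) + 2) / 2 - (k : ℝ)) := by
  rw [Sfun, Complex.re_sum]
  refine Finset.sum_congr rfl fun k _ => ?_
  have h1 : rayPow r 0 (((m : ℂ) + 2 - 2 * (k : ℂ)) / 2)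
      = ((r ^ (((m : ℝ) + 2) / 2 - (k : ℝ)) : ℝ) : ℂ) := by
    rw [rayPow, Real.rpow_def_of_pos hr, Complex.ofReal_exp]
    congr 1
    push_cast
    ring
  rw [h1]
  simp [Complex.mul_re]

lemma Sfun_growth (m : ℕ) (hm : 1 ≤ m) (b : Fin m → ℂ) (C₁ : ℝ) :
    Tendsto (fun r : ℝ => (Sfun m b r 0).re - C₁ * Real.log r - r) atTop atTop := by
  set p : ℝ := ((m : ℝ) + 2) / 2 with hp
  have hp1 : 1 < p := by
    have : (1 : ℝ) ≤ (m : ℝ) := by exact_mod_cast hm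
    rw [hp]; linarith
  have hp0 : 0 < p := by linarith
  set K := (m + 1) / 2 + 1 with hK
  set c : ℕ → ℝ := fun k => (2 * bcoef m b k / ((m : ℂ) + 2 - 2 * (k : ℂ))).re with hc
  have hc0 : c 0 = 2 / ((m : ℝ) + 2) := by
    have hb0 : bcoef m b 0 = 1 := by rw [bcoef]
    have h2 : ((m : ℂ) + 2 - 2 * ((0:ℕ) : ℂ)) = (((m : ℝ) + 2 : ℝ) : ℂ) := by push_cast; ring
    rw [hc]
    simp only [hb0, h2, mul_one, Complex.div_ofReal_re]
    norm_num
  have hc0pos : 0 < c 0 := by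
    rw [hc0]; positivity
  -- the normalized function
  set gfun : ℝ → ℝ := fun r =>
    (∑ k ∈ Finset.range K, c k * r ^ (-(k : ℝ))) - C₁ * (Real.log r / r ^ p) - r ^ (1 - p)
    with hg
  have hgl : Tendsto gfun atTop (𝓝 (c 0)) := by
    have h1 : Tendsto (fun r : ℝ => ∑ k ∈ Finset.range K, c k * r ^ (-(k : ℝ))) atTop
        (𝓝 (∑ k ∈ Finset.range K, if k = 0 then c 0 else 0)) := by
      refine tendsto_finset_sum _ fun k _ => ?_
      rcases Nat.eq_zero_or_pos k with rfl | hk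
      · simpa using tendsto_const_nhds.congr' (by
          filter_upwards [eventually_gt_atTop (0:ℝ)] with r hr
          norm_num)
      · simp only [if_neg (Nat.pos_iff_ne_zero.mp hk)]
        simpa using (tendsto_rpow_neg_atTop (by exact_mod_cast hk : (0:ℝ) < (k:ℝ))).const_mul (c k)
    have h2 : Tendsto (fun r : ℝ => C₁ * (Real.log r / r ^ p)) atTop (𝓝 0) := by
      simpa using ((isLittleO_log_rpow_atTop hp0).tendsto_div_nhds_zero).const_mul C₁
    have h3 : Tendsto (fun r : ℝ => r ^ (1 - p)) atTop (𝓝 0) := by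
      have := tendsto_rpow_neg_atTop (by linarith : (0:ℝ) < p - 1)
      simpa [neg_sub] using this
    have := (h1.sub h2).sub h3
    simpa [Finset.sum_ite_eq', hK, hg] using this
  have hmul : Tendsto (fun r : ℝ => r ^ p * gfun r) atTop atTop :=
    Tendsto.atTop_mul_pos hc0pos (tendsto_rpow_atTop hp0) hgl
  refine hmul.congr' ?_
  filter_upwards [eventually_gt_atTop (0:ℝ)] with r hr
  have hrp : (0:ℝ) < r ^ p := Real.rpow_pos_of_pos hr p
  rw [hg]
  simp only
  rw [Sfun_re m b r hr, mul_sub, mul_sub, Finset.mul_sum]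
  congr 1
  · congr 1
    · refine Finset.sum_congr rfl fun k _ => ?_
      rw [mul_comm (r ^ p) _, mul_assoc, ← Real.rpow_add hr]
      congr 1
      rw [hp]; ring_nf
    · rw [mul_comm (r ^ p), mul_assoc, div_mul_cancel₀ _ (ne_of_gt hrp)]
  · rw [← Real.rpow_add hr]
    norm_num
lemma pot_continuous (m : ℕ) (b : Fin m → ℂ) : Continuous (pot m b) := by
  unfold pot
  exact (continuous_pow m).add (continuous_finset_sum _ fun k _ =>
    continuous_const.mul (continuous_pow _))

lemma pot_bound (m : ℕ) (b : Fin m → ℂ) : ∃ A : ℝ, 1 ≤ A ∧ ∀ r : ℝ, 1 ≤ r →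
    ‖pot m b ((r : ℝ) : ℂ)‖ ≤ A * r ^ m := by
  have hs0 : (0:ℝ) ≤ ∑ k : Fin m, ‖b k‖ := Finset.sum_nonneg fun _ _ => norm_nonneg _
  refine ⟨1 + ∑ k : Fin m, ‖b k‖, by linarith, fun r hr => ?_⟩
  have hr0 : (0:ℝ) ≤ r := by linarith
  have hnr : ∀ n : ℕ, ‖((r : ℝ) : ℂ) ^ n‖ = r ^ n := by
    intro n
    rw [norm_pow, Complex.norm_real, Real.norm_eq_abs, _root_.abs_of_nonneg hr0]
  calc ‖pot m b ((r : ℝ) : ℂ)‖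
      ≤ ‖((r : ℝ) : ℂ) ^ m‖ + ‖∑ k : Fin m, b k * ((r : ℝ) : ℂ) ^ (m - 1 - (k : ℕ))‖ :=
        norm_add_le _ _
    _ ≤ r ^ m + ∑ k : Fin m, ‖b k‖ * r ^ m := by
        refine add_le_add (le_of_eq (hnr m)) ((norm_sum_le _ _).trans ?_)
        refine Finset.sum_le_sum fun k _ => ?_
        rw [norm_mul, hnr]
        exact mul_le_mul_of_nonneg_left
          (pow_le_pow_right₀ hr (Nat.sub_le _ _ |>.trans (Nat.sub_le _ _))) (norm_nonneg _)
    _ = (1 + ∑ k : Fin m, ‖b k‖) * r ^ m := by rw [← Finset.sum_mul]; ring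

lemma norm_N (m : ℕ) (b : Fin m → ℂ) (r : ℝ) :
    ‖rayPow r 0 (-(rmC m b)) * Complex.exp (Sfun m b r 0)‖ =
      Real.exp (-((rmC m b).re * Real.log r) + (Sfun m b r 0).re) := by
  rw [rayPow, ← Complex.exp_add, Complex.norm_exp]
  congr 1
  simp [Complex.add_re, Complex.mul_re]

/-- Main decay estimates for a solution with Sibuya asymptotics along the positive axis. -/
lemma decay_est (m : ℕ) (hm : 1 ≤ m) (b : Fin m → ℂ) (f : ℂ → ℂ)
    (hfa : Tendsto (fun r : ℝ => f ((r : ℝ) : ℂ) * rayPow r 0 (-(rmC m b)) *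
      Complex.exp (Sfun m b r 0)) atTop (𝓝 1)) :
    (∀ᶠ x in atTop, ‖pot m b ((x : ℝ) : ℂ) * f ((x : ℝ) : ℂ)‖ ≤ Real.exp (-x)) ∧
      Tendsto (fun x : ℝ => f ((x : ℝ) : ℂ)) atTop (𝓝 0) := by
  obtain ⟨A, hA1, hA⟩ := pot_bound m b
  have hA0 : (0:ℝ) < A := by linarith
  -- eventual bound on ‖f‖
  have hfb : ∀ᶠ x in atTop, ‖f ((x : ℝ) : ℂ)‖ ≤
      2 * Real.exp ((rmC m b).re * Real.log x - (Sfun m b x 0).re) := by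
    have h2 : ∀ᶠ x in atTop, ‖f ((x : ℝ) : ℂ) * rayPow x 0 (-(rmC m b)) *
        Complex.exp (Sfun m b x 0)‖ ≤ 2 := by
      have := hfa.norm
      rw [norm_one] at this
      exact this.eventually_le_const (by norm_num)
    filter_upwards [h2] with x hx
    rw [mul_assoc, norm_mul, norm_N] at hx
    have hexp : (0:ℝ) < Real.exp (-((rmC m b).re * Real.log x) + (Sfun m b x 0).re) :=
      Real.exp_pos _
    rw [show (rmC m b).re * Real.log x - (Sfun m b x 0).re =
      -(-((rmC m b).re * Real.log x) + (Sfun m b x 0).re) by ring, Real.exp_neg]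
    calc ‖f ((x:ℝ):ℂ)‖ ≤ 2 / Real.exp (-((rmC m b).re * Real.log x) + (Sfun m b x 0).re) := (le_div_iff₀ hexp).mpr hx
      _ = 2 * (Real.exp (-((rmC m b).re * Real.log x) + (Sfun m b x 0).re))⁻¹ := by
          rw [div_eq_mul_inv]
  constructor
  · have hgr := Sfun_growth m hm b ((m : ℝ) + (rmC m b).re)
    filter_upwards [hfb, hgr.eventually_ge_atTop (Real.log (2 * A)),
      eventually_ge_atTop (1:ℝ)] with x hx hgx hx1
    have hx0 : (0:ℝ) < x := by linarith
    have hpm : x ^ m = Real.exp ((m : ℝ) * Real.log x) := by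
      rw [← Real.log_pow, Real.exp_log (by positivity)]
    calc ‖pot m b ((x:ℝ):ℂ) * f ((x:ℝ):ℂ)‖
        = ‖pot m b ((x:ℝ):ℂ)‖ * ‖f ((x:ℝ):ℂ)‖ := norm_mul _ _
      _ ≤ (A * x ^ m) * (2 * Real.exp ((rmC m b).re * Real.log x - (Sfun m b x 0).re)) := by
          refine mul_le_mul (hA x hx1) hx (norm_nonneg _) (by positivity)
      _ = Real.exp (Real.log (2 * A) + ((m : ℝ) * Real.log x +
            ((rmC m b).re * Real.log x - (Sfun m b x 0).re))) := by
          rw [Real.exp_add, Real.exp_add, Real.exp_log (by positivity), hpm]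
          ring
      _ ≤ Real.exp (-x) := by
          rw [Real.exp_le_exp]
          linarith
  · have hgr := Sfun_growth m hm b (rmC m b).re
    have hlim : Tendsto (fun x : ℝ => 2 * Real.exp ((rmC m b).re * Real.log x
        - (Sfun m b x 0).re)) atTop (𝓝 0) := by
      have h1 : Tendsto (fun x : ℝ => (rmC m b).re * Real.log x - (Sfun m b x 0).re)
          atTop atBot := by
        refine tendsto_atBot_mono' atTop ?_ (tendsto_neg_atTop_atBot.comp hgr)
        filter_upwards [eventually_ge_atTop (0:ℝ)] with x hx0
        simp only [Function.comp_apply]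
        linarith
      simpa [mul_zero] using (Real.tendsto_exp_atBot.comp h1).const_mul (2:ℝ)
    refine squeeze_zero_norm' ?_ hlim
    filter_upwards [hfb] with x hx using hx
lemma deriv_bounded (m : ℕ) (b : Fin m → ℂ) (F : ℂ → ℂ) (hF : Differentiable ℂ F)
    (hode : ∀ X : ℂ, deriv (deriv F) X = pot m b X * F X)
    (hint : ∀ᶠ x : ℝ in atTop, ‖pot m b ((x : ℝ) : ℂ) * F ((x : ℝ) : ℂ)‖ ≤ Real.exp (-x)) :
    ∃ M x₀ : ℝ, ∀ x : ℝ, x₀ ≤ x → ‖deriv F ((x : ℝ) : ℂ)‖ ≤ M := by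
  obtain ⟨x₀, hx₀⟩ := eventually_atTop.mp hint
  refine ⟨‖deriv F ((x₀ : ℝ) : ℂ)‖ + Real.exp (-x₀), x₀, fun x hx => ?_⟩
  have hFd := entire_deriv hF
  have hder : ∀ t ∈ Set.uIcc x₀ x, HasDerivAt (fun u : ℝ => deriv F ((u : ℝ) : ℂ))
      (pot m b ((t : ℝ) : ℂ) * F ((t : ℝ) : ℂ)) t := by
    intro t _
    have h1 := (hFd ((t : ℝ) : ℂ)).hasDerivAt
    rw [hode] at h1
    exact h1.comp_ofReal
  have hcont : Continuous (fun t : ℝ => pot m b ((t : ℝ) : ℂ) * F ((t : ℝ) : ℂ)) :=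
    ((pot_continuous m b).comp Complex.continuous_ofReal).mul
      (hF.continuous.comp Complex.continuous_ofReal)
  have hftc := intervalIntegral.integral_eq_sub_of_hasDerivAt hder
    (hcont.intervalIntegrable _ _)
  have h2 : deriv F ((x : ℝ) : ℂ) = deriv F ((x₀ : ℝ) : ℂ) +
      ∫ t in x₀..x, pot m b ((t : ℝ) : ℂ) * F ((t : ℝ) : ℂ) := by
    rw [hftc]; ring
  rw [h2]
  refine (norm_add_le _ _).trans (add_le_add le_rfl ?_)
  have hexpder : ∀ t ∈ Set.uIcc x₀ x, HasDerivAt (fun u : ℝ => -Real.exp (-u))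
      (Real.exp (-t)) t := by
    intro t _
    exact (((Real.hasDerivAt_exp (-t)).comp t (hasDerivAt_neg t)).neg).congr_deriv (by simp)
  have hexpint := intervalIntegral.integral_eq_sub_of_hasDerivAt hexpder
    ((Real.continuous_exp.comp continuous_neg).intervalIntegrable _ _)
  calc ‖∫ t in x₀..x, pot m b ((t : ℝ) : ℂ) * F ((t : ℝ) : ℂ)‖
      ≤ ∫ t in x₀..x, ‖pot m b ((t : ℝ) : ℂ) * F ((t : ℝ) : ℂ)‖ :=
        intervalIntegral.norm_integral_le_integral_norm hx
    _ ≤ ∫ t in x₀..x, Real.exp (-t) := by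
        refine intervalIntegral.integral_mono_on hx
          ((hcont.norm.comp continuous_id).intervalIntegrable _ _)
          ((Real.continuous_exp.comp continuous_neg).intervalIntegrable _ _)
          (fun t ht => hx₀ t ht.1)
    _ = -Real.exp (-x) - -Real.exp (-x₀) := hexpint
    _ ≤ Real.exp (-x₀) := by
        have := Real.exp_pos (-x)
        linarith
lemma keyU (m : ℕ) (hm : 1 ≤ m) (b : Fin m → ℂ) (f g : ℂ → ℂ)
    (hf : Differentiable ℂ f) (hg : Differentiable ℂ g)
    (hfode : ∀ X : ℂ, deriv (deriv f) X = pot m b X * f X)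
    (hgode : ∀ X : ℂ, deriv (deriv g) X = pot m b X * g X)
    (hfa : Tendsto (fun r : ℝ => f ((r : ℝ) : ℂ) * rayPow r 0 (-(rmC m b)) *
      Complex.exp (Sfun m b r 0)) atTop (𝓝 1))
    (hga : Tendsto (fun r : ℝ => g ((r : ℝ) : ℂ) * rayPow r 0 (-(rmC m b)) *
      Complex.exp (Sfun m b r 0)) atTop (𝓝 1)) : f = g := by
  obtain ⟨hfint, hf0⟩ := decay_est m hm b f hfa
  obtain ⟨hgint, hg0⟩ := decay_est m hm b g hga
  have hfd2 : ∀ X : ℂ, HasDerivAt (deriv f) (pot m b X * f X) X := fun X => by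
    have h := ((entire_deriv hf) X).hasDerivAt
    rwa [hfode] at h
  have hgd2 : ∀ X : ℂ, HasDerivAt (deriv g) (pot m b X * g X) X := fun X => by
    have h := ((entire_deriv hg) X).hasDerivAt
    rwa [hgode] at h
  -- Wronskian
  set W : ℂ → ℂ := fun Z => f Z * deriv g Z - deriv f Z * g Z with hWdef
  have hWd : ∀ Z, HasDerivAt W 0 Z := by
    intro Z
    have h := (((hf Z).hasDerivAt.mul (hgd2 Z)).sub ((hfd2 Z).mul (hg Z).hasDerivAt))
    exact h.congr_deriv (by ring)
  have hWconst : ∀ Z, W Z = W 0 := fun Z =>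
    is_const_of_deriv_eq_zero (fun z => (hWd z).differentiableAt) (fun z => (hWd z).deriv) Z 0
  obtain ⟨Mf, xf, hMf⟩ := deriv_bounded m b f hf hfode hfint
  obtain ⟨Mg, xg, hMg⟩ := deriv_bounded m b g hg hgode hgint
  have hWlim : Tendsto (fun x : ℝ => W ((x : ℝ) : ℂ)) atTop (𝓝 0) := by
    have hb : Tendsto (fun x : ℝ => ‖f ((x : ℝ) : ℂ)‖ * Mg + Mf * ‖g ((x : ℝ) : ℂ)‖)
        atTop (𝓝 0) := by
      have := ((hf0.norm.mul_const Mg).add ((hg0.norm.const_mul Mf)))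
      simpa using this
    refine squeeze_zero_norm' ?_ hb
    · filter_upwards [eventually_ge_atTop xf, eventually_ge_atTop xg] with x h1 h2
      calc ‖W ((x : ℝ) : ℂ)‖
          ≤ ‖f ((x:ℝ):ℂ) * deriv g ((x:ℝ):ℂ)‖ + ‖deriv f ((x:ℝ):ℂ) * g ((x:ℝ):ℂ)‖ :=
            norm_sub_le _ _
        _ ≤ ‖f ((x:ℝ):ℂ)‖ * Mg + Mf * ‖g ((x:ℝ):ℂ)‖ := by
            rw [norm_mul, norm_mul]
            exact add_le_add
              (mul_le_mul_of_nonneg_left (hMg x h2) (norm_nonneg _))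
              (mul_le_mul_of_nonneg_right (hMf x h1) (norm_nonneg _))
  have hW0 : W 0 = 0 := by
    have hcst : Tendsto (fun x : ℝ => W ((x : ℝ) : ℂ)) atTop (𝓝 (W 0)) := by
      rw [show (fun x : ℝ => W ((x : ℝ) : ℂ)) = fun _ => W 0 from funext fun x => hWconst _]
      exact tendsto_const_nhds
    exact tendsto_nhds_unique hcst hWlim
  have hWzero : ∀ Z, W Z = 0 := fun Z => (hWconst Z).trans hW0
  -- f is eventually nonzero on the real axis
  have hfne : ∀ᶠ x : ℝ in atTop, f ((x : ℝ) : ℂ) ≠ 0 := by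
    have h1 := hfa.eventually (Metric.ball_mem_nhds (1 : ℂ) one_pos)
    filter_upwards [h1] with x hx hzero
    rw [dist_eq_norm, hzero, zero_mul, zero_mul, zero_sub, norm_neg,
      norm_one] at hx
    exact lt_irrefl _ hx
  obtain ⟨x₁, hx₁⟩ := eventually_atTop.mp hfne
  -- the ratio is constant on [x₁, ∞)
  set q : ℝ → ℂ := fun x => g ((x : ℝ) : ℂ) / f ((x : ℝ) : ℂ) with hqdef
  have hqder : ∀ x : ℝ, x₁ ≤ x → HasDerivAt q 0 x := by
    intro x hx
    have hfx : HasDerivAt (fun t : ℝ => f ((t : ℝ) : ℂ)) (deriv f ((x : ℝ) : ℂ)) x :=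
      (hf _).hasDerivAt.comp_ofReal
    have hgx : HasDerivAt (fun t : ℝ => g ((t : ℝ) : ℂ)) (deriv g ((x : ℝ) : ℂ)) x :=
      (hg _).hasDerivAt.comp_ofReal
    have hne := hx₁ x hx
    have hdiv := hgx.div hfx hne
    have hnum : deriv g ((x : ℝ) : ℂ) * f ((x : ℝ) : ℂ) -
        g ((x : ℝ) : ℂ) * deriv f ((x : ℝ) : ℂ) = 0 := by
      have hh := hWzero ((x : ℝ) : ℂ)
      rw [hWdef] at hh
      linear_combination hh
    rw [hnum, zero_div] at hdiv
    exact hdiv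
  have hqconst : ∀ x : ℝ, x₁ ≤ x → q x = q x₁ := by
    intro x hx
    have h1 : ∀ t ∈ Set.uIcc x₁ x, HasDerivAt q (0 : ℂ) t := by
      intro t ht
      rw [Set.uIcc_of_le hx] at ht
      exact hqder t ht.1
    have h2 := intervalIntegral.integral_eq_sub_of_hasDerivAt h1
      (intervalIntegrable_const)
    rw [intervalIntegral.integral_const, smul_zero] at h2
    exact (sub_eq_zero.mp h2.symm)
  have hNne : ∀ x : ℝ, rayPow x 0 (-(rmC m b)) ≠ 0 := fun x => Complex.exp_ne_zero _
  have hqlim : Tendsto q atTop (𝓝 1) := by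
    have hdiv := hga.div hfa one_ne_zero
    rw [div_one] at hdiv
    refine hdiv.congr' ?_
    filter_upwards [eventually_ge_atTop x₁] with x hx
    have hne := hx₁ x hx
    simp only [Pi.div_apply, hqdef]
    rw [mul_assoc, mul_assoc, mul_comm (rayPow x 0 (-(rmC m b))) _]
    rw [div_eq_div_iff (mul_ne_zero hne (mul_ne_zero (Complex.exp_ne_zero _) (hNne x))) hne]
    ring
  have hq1 : q x₁ = 1 := by
    have hcst : Tendsto q atTop (𝓝 (q x₁)) := by
      refine tendsto_const_nhds.congr' ?_
      filter_upwards [eventually_ge_atTop x₁] with x hx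
      exact (hqconst x hx).symm
    exact tendsto_nhds_unique hcst hqlim
  have heq : ∀ x : ℝ, x₁ ≤ x → f ((x : ℝ) : ℂ) = g ((x : ℝ) : ℂ) := by
    intro x hx
    have h := (hqconst x hx).trans hq1
    simp only [hqdef] at h
    have hne := hx₁ x hx
    field_simp [hne] at h
    exact h.symm
  -- identity theorem
  have hfan := analyticOnNhd_univ_iff_differentiable.mpr hf
  have hgan := analyticOnNhd_univ_iff_differentiable.mpr hg
  refine AnalyticOnNhd.eq_of_frequently_eq hfan hgan (z₀ := ((x₁ + 1 : ℝ) : ℂ)) ?_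
  have hu : Tendsto (fun n : ℕ => (((x₁ + 1 + 1 / ((n : ℝ) + 1) : ℝ)) : ℂ)) atTop
      (𝓝[≠] ((x₁ + 1 : ℝ) : ℂ)) := by
    apply tendsto_nhdsWithin_of_tendsto_nhds_of_eventually_within
    · have h1 : Tendsto (fun n : ℕ => (x₁ + 1 + 1 / ((n : ℝ) + 1) : ℝ)) atTop
          (𝓝 (x₁ + 1)) := by
        have h0 := tendsto_one_div_add_atTop_nhds_zero_nat (𝕜 := ℝ)
        have := h0.const_add (x₁ + 1)
        simpa using this
      exact (Complex.continuous_ofReal.tendsto _).comp h1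
    · refine Eventually.of_forall fun n => ?_
      simp only [Set.mem_compl_iff, Set.mem_singleton_iff]
      intro hcon
      have h3 : (x₁ + 1 + 1 / ((n : ℝ) + 1) : ℝ) = x₁ + 1 := Complex.ofReal_inj.mp hcon
      have h4 : (0 : ℝ) < 1 / ((n : ℝ) + 1) := by positivity
      linarith
  refine hu.frequently (Eventually.of_forall fun n => ?_).frequently
  have h4 : (0 : ℝ) < 1 / ((n : ℝ) + 1) := by positivity
  exact heq _ (by linarith)
lemma conj_two_pi (m : ℕ) :
    (starRingEnd ℂ) (2 * Real.pi * Complex.I / (m + 2)) =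
      -(2 * Real.pi * Complex.I / (m + 2)) := by
  simp [map_div₀, Complex.conj_ofNat]
  ring

lemma omPow_conj (m : ℕ) (s : ℂ) :
    (starRingEnd ℂ) (omPow m s) = omPow m (-((starRingEnd ℂ) s)) := by
  rw [omPow, omPow, ← Complex.exp_conj, map_mul, conj_two_pi]
  congr 1
  ring

lemma conj_sym (m : ℕ) (hm : 1 ≤ m)
    (Φ₀ : ℂ × (Fin m → ℂ) → ℂ)
    (hent : Differentiable ℂ Φ₀)
    (hode : ∀ a : Fin m → ℂ, ∀ X : ℂ,
      -(deriv (deriv fun Y => Φ₀ (Y, a)) X) + pot m a X * Φ₀ (X, a) = 0)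
    (hasym : ∀ a : Fin m → ℂ, SibAsymp m a fun X => Φ₀ (X, a))
    (c : Fin m → ℂ) (Z : ℂ) :
    Φ₀ (Z, fun j => (starRingEnd ℂ) (c j)) =
      (starRingEnd ℂ) (Φ₀ ((starRingEnd ℂ) Z, c)) := by
  set cb : Fin m → ℂ := fun j => (starRingEnd ℂ) (c j) with hcb
  set F : ℂ → ℂ := fun Z => Φ₀ (Z, c) with hF
  set f : ℂ → ℂ := fun Z => Φ₀ (Z, cb) with hfdef
  set g : ℂ → ℂ := fun w => (starRingEnd ℂ) (F ((starRingEnd ℂ) w)) with hgdef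
  have hth : |(0:ℝ)| < 3 * Real.pi / (m + 2) := by
    rw [abs_zero]
    have : (0:ℝ) < (m:ℝ) + 2 := by positivity
    positivity
  have hFdiff : Differentiable ℂ F := hent.comp (differentiable_id.prodMk (differentiable_const c))
  have hfdiff : Differentiable ℂ f := hent.comp (differentiable_id.prodMk (differentiable_const cb))
  have hgdiff : Differentiable ℂ g := differentiable_cflip hFdiff
  have hFode : ∀ X : ℂ, deriv (deriv F) X = pot m c X * F X := fun X => by
    have h := hode c X
    simp only [hF]
    linear_combination -h
  have hfode : ∀ X : ℂ, deriv (deriv f) X = pot m cb X * f X := fun X => by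
    have h := hode cb X
    simp only [hfdef]
    linear_combination -h
  have hgode : ∀ X : ℂ, deriv (deriv g) X = pot m cb X * g X := by
    intro X
    have h1 : deriv g = fun z => (starRingEnd ℂ) (deriv F ((starRingEnd ℂ) z)) :=
      deriv_cflip hFdiff
    rw [h1]
    have h2 := congrFun (deriv_cflip (entire_deriv hFdiff)) X
    rw [h2, hFode ((starRingEnd ℂ) X), map_mul]
    congr 1
    have h3 := pot_conj m c ((starRingEnd ℂ) X)
    rw [Complex.conj_conj] at h3
    rw [hcb]
    exact h3.symm
  have hfa : Tendsto (fun r : ℝ => f ((r : ℝ) : ℂ) * rayPow r 0 (-(rmC m cb)) *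
      Complex.exp (Sfun m cb r 0)) atTop (𝓝 1) := by
    have h := hasym cb 0 hth
    refine h.congr fun r => ?_
    rw [rayPt_zero]
  have hga : Tendsto (fun r : ℝ => g ((r : ℝ) : ℂ) * rayPow r 0 (-(rmC m cb)) *
      Complex.exp (Sfun m cb r 0)) atTop (𝓝 1) := by
    have h := hasym c 0 hth
    have h2 := (Complex.continuous_conj.tendsto 1).comp h
    rw [show (starRingEnd ℂ) 1 = 1 from map_one _] at h2
    refine h2.congr fun r => ?_
    simp only [Function.comp_apply, rayPt_zero]
    rw [map_mul, map_mul, rayPow_conj_real, ← Complex.exp_conj, ← Sfun_conj, map_neg, ← rmC_conj]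
    rw [hgdef]
    simp only [hF]
    rw [Complex.conj_ofReal]
  have := keyU m hm cb f g hfdiff hgdiff hfode hgode hfa hga
  exact congrFun this Z

/-- for real coefficients `a ∈ ℝ^m`, the number `-i·C(a)` is real
(equivalently, `C(a)` is purely imaginary). -/
theorem stmt7 (m : ℕ) (hm : 1 ≤ m)
    (Φ₀ : ℂ × (Fin m → ℂ) → ℂ)
    (hent : Differentiable ℂ Φ₀)
    (hode : ∀ a : Fin m → ℂ, ∀ X : ℂ,
      -(deriv (deriv fun Y => Φ₀ (Y, a)) X) + pot m a X * Φ₀ (X, a) = 0)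
    (hasym : ∀ a : Fin m → ℂ, SibAsymp m a fun X => Φ₀ (X, a))
    (C : (Fin m → ℂ) → ℂ)
    (hC : ∀ (X : ℂ) (a : Fin m → ℂ),
      omPow m ((m : ℂ) / 2 + rmC m a) * Φ₀ (om m * X, omAct m 1 a) =
        C a * Φ₀ (X, a) +
          omPow m (-((m : ℂ) / 2) - rmC m a) * Φ₀ ((om m)⁻¹ * X, omAct m (-1) a))
    (a : Fin m → ℂ) (ha : ∀ j, (a j).im = 0) :
    ∃ t : ℝ, -Complex.I * C a = (t : ℂ) := by
  
  have haconj : (fun j => (starRingEnd ℂ) (a j)) = a :=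
    funext fun j => Complex.conj_eq_iff_im.mpr (ha j)
  have hS0 : ∀ Z : ℂ, Φ₀ (Z, a) = (starRingEnd ℂ) (Φ₀ ((starRingEnd ℂ) Z, a)) := by
    intro Z
    have h := conj_sym m hm Φ₀ hent hode hasym a Z
    rwa [haconj] at h
  have hact : (fun j => (starRingEnd ℂ) ((omAct m (-1) a) j)) = omAct m 1 a := by
    funext j
    show (starRingEnd ℂ) (om m ^ ((-1 : ℤ) * (((j : ℕ) : ℤ) + 1)) * a j)
      = om m ^ ((1 : ℤ) * (((j : ℕ) : ℤ) + 1)) * a j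
    rw [map_mul, map_zpow₀, conj_om, inv_zpow, ← zpow_neg, congrFun haconj j,
      show (-(-1 * (((j : ℕ) : ℤ) + 1))) = (1 : ℤ) * (((j : ℕ) : ℤ) + 1) by ring]
  have hS1 : ∀ Z : ℂ, Φ₀ (Z, omAct m 1 a) =
      (starRingEnd ℂ) (Φ₀ ((starRingEnd ℂ) Z, omAct m (-1) a)) := by
    intro Z
    have h := conj_sym m hm Φ₀ hent hode hasym (omAct m (-1) a) Z
    rwa [hact] at h
  have hrm : (starRingEnd ℂ) (rmC m a) = rmC m a := by
    have h := rmC_conj m a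
    rw [haconj] at h
    exact h.symm
  have hhalf : (starRingEnd ℂ) ((m : ℂ) / 2) = (m : ℂ) / 2 := by
    rw [map_div₀]
    simp [Complex.conj_ofNat]
  have hmm2 : (starRingEnd ℂ) ((m : ℂ) / 2 + rmC m a) = (m : ℂ) / 2 + rmC m a := by
    rw [map_add, hrm, hhalf]
  have e1 : (starRingEnd ℂ) (omPow m ((m : ℂ) / 2 + rmC m a))
      = omPow m (-((m : ℂ) / 2 + rmC m a)) := by rw [omPow_conj, hmm2]
  have e2 : (starRingEnd ℂ) (omPow m (-((m : ℂ) / 2) - rmC m a))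
      = omPow m ((m : ℂ) / 2 + rmC m a) := by
    rw [omPow_conj, map_sub, map_neg, hrm, hhalf]
    congr 1
    ring
  have hkey : ∀ X : ℂ, (C a + (starRingEnd ℂ) (C a)) * Φ₀ (X, a) = 0 := by
    intro X
    have h1 := hC X a
    rw [show -((m : ℂ) / 2) - rmC m a = -((m : ℂ) / 2 + rmC m a) by ring] at h1
    have h2 := congrArg (starRingEnd ℂ) (hC ((starRingEnd ℂ) X) a)
    have e3 : (starRingEnd ℂ) (Φ₀ (om m * (starRingEnd ℂ) X, omAct m 1 a))
        = Φ₀ ((om m)⁻¹ * X, omAct m (-1) a) := by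
      have h := congrArg (starRingEnd ℂ) (hS1 (om m * (starRingEnd ℂ) X))
      rw [Complex.conj_conj] at h
      rw [h, map_mul, conj_om, Complex.conj_conj]
    have e4 : (starRingEnd ℂ) (Φ₀ ((starRingEnd ℂ) X, a)) = Φ₀ (X, a) := (hS0 X).symm
    have e5 : (starRingEnd ℂ) (Φ₀ ((om m)⁻¹ * (starRingEnd ℂ) X, omAct m (-1) a))
        = Φ₀ (om m * X, omAct m 1 a) := by
      have h := hS1 (om m * X)
      rw [map_mul, conj_om] at h
      exact h.symm
    rw [map_mul, map_add, map_mul, map_mul, e1, e2, e3, e4, e5] at h2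
    linear_combination -h1 - h2
  have hth : |(0:ℝ)| < 3 * Real.pi / (m + 2) := by
    rw [abs_zero]
    have h0 : (0:ℝ) < (m : ℝ) + 2 := by positivity
    positivity
  have hfne : ∃ x : ℝ, Φ₀ (((x : ℝ) : ℂ), a) ≠ 0 := by
    have h := (hasym a 0 hth).eventually (Metric.ball_mem_nhds (1 : ℂ) one_pos)
    obtain ⟨x, hx⟩ := h.exists
    refine ⟨x, fun hzero => ?_⟩
    simp only [rayPt_zero] at hx
    rw [dist_eq_norm, hzero, zero_mul, zero_mul, zero_sub,
      norm_neg, norm_one] at hx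
    exact lt_irrefl _ hx
  obtain ⟨x, hx⟩ := hfne
  have hsum : C a + (starRingEnd ℂ) (C a) = 0 := by
    rcases mul_eq_zero.mp (hkey ((x : ℝ) : ℂ)) with h | h
    · exact h
    · exact absurd h hx
  have hre : (C a).re = 0 := by
    have h := congrArg Complex.re hsum
    simp only [Complex.add_re, Complex.conj_re, Complex.zero_re] at h
    linarith
  refine ⟨(C a).im, ?_⟩
  apply Complex.ext
  · simp [Complex.mul_re]
  · simp [Complex.mul_im, hre]
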